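/- arXiv:1705.06517 — 3 statements merged into one kernel-verified Lean document; each statement's English description precedes it below -/
import Mathlib

section
/- Every n×n matrix with non-negative integer entries all of whose row sums and column sums equal 2 is the sum of two n×n permutation matrices. -/
/-- The equivalence `Fin n × Fin 2 ≃ Fin (2*n)`, `(a, b) ↦ 2a + b`. -/
def pairFinEquiv (n : ℕ) : Fin n × Fin 2 ≃ Fin (2 * n) where
  toFun p := ⟨2 * p.1.1 + p.2.1, by have h1 := p.1.2; have h2 := p.2.2; omega⟩
  invFun i := (⟨i.1 / 2, by have := i.2; omega⟩, ⟨i.1 % 2, by omega⟩)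
  left_inv := by
    rintro ⟨⟨a, ha⟩, ⟨b, hb⟩⟩
    simp only [Prod.mk.injEq]
    constructor <;> apply Fin.ext <;> simp <;> omega
  right_inv := by
    rintro ⟨i, hi⟩
    apply Fin.ext
    simp
    omega

/-- The doubling map `w ↦ w̃`, sending a permutation of `{0, …, n-1}` to the permutation of
`{0, …, 2n-1}` with `w̃(2i) = 2w(i)` and `w̃(2i+1) = 2w(i)+1` (the zero-based version of
`w̃(2i) = 2w(i)`, `w̃(2i-1) = 2w(i)-1`). -/
def double {n : ℕ} (w : Equiv.Perm (Fin n)) : Equiv.Perm (Fin (2 * n)) :=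
  (pairFinEquiv n).permCongr (Equiv.prodCongr w (Equiv.refl (Fin 2)))

/-- The number of inversions of a permutation, i.e. its Coxeter length. -/
noncomputable def invLength {n : ℕ} (u : Equiv.Perm (Fin n)) : ℕ :=
  Set.ncard { p : Fin n × Fin n | p.1 < p.2 ∧ u p.2 < u p.1 }

/-- Bruhat order on the symmetric group: the reflexive-transitive closure of the relation
`a → a * t` where `t` is a transposition and `ℓ(a * t) > ℓ(a)`. -/
def BruhatLE {n : ℕ} (x w : Equiv.Perm (Fin n)) : Prop :=
  Relation.ReflTransGen
    (fun a b => (∃ i j : Fin n, b = a * Equiv.swap i j) ∧ invLength a < invLength b) x w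

/-- The subgroup `H` of `S_{2n}` of permutations preserving each pair `{2i, 2i+1}`. -/
def pairSubgroup (n : ℕ) : Subgroup (Equiv.Perm (Fin (2 * n))) where
  carrier := { u | ∀ i, (u i).1 / 2 = i.1 / 2 }
  one_mem' := by intro i; rfl
  mul_mem' := by
    intro a b ha hb i
    rw [Equiv.Perm.mul_apply, ha, hb]
  inv_mem' := by
    intro a ha i
    have h := ha (a⁻¹ i)
    rw [show a (a⁻¹ i) = i from a.apply_symm_apply i] at h
    omega

/-- The subgroup `K` of `S_{2n}` of parity-preserving permutations. -/
def paritySubgroup (n : ℕ) : Subgroup (Equiv.Perm (Fin (2 * n))) where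
  carrier := { u | ∀ i, (u i).1 % 2 = i.1 % 2 }
  one_mem' := by intro i; rfl
  mul_mem' := by
    intro a b ha hb i
    rw [Equiv.Perm.mul_apply, ha, hb]
  inv_mem' := by
    intro a ha i
    have h := ha (a⁻¹ i)
    rw [show a (a⁻¹ i) = i from a.apply_symm_apply i] at h
    omega

/-- A permutation of `{0,…,2n-1}` is bi-`H`-reduced if it is increasing on each pair
`{2i, 2i+1}` and so is its inverse. -/
def BiReduced {n : ℕ} (v : Equiv.Perm (Fin (2 * n))) : Prop :=
  ∀ i : Fin n,
    v ⟨2 * i.1, by have := i.2; omega⟩ < v ⟨2 * i.1 + 1, by have := i.2; omega⟩ ∧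
    v⁻¹ ⟨2 * i.1, by have := i.2; omega⟩ < v⁻¹ ⟨2 * i.1 + 1, by have := i.2; omega⟩

/-- Membership of `v` in the double coset `H x H` of `H = pairSubgroup n`. -/
def InPairDoubleCoset {n : ℕ} (x v : Equiv.Perm (Fin (2 * n))) : Prop :=
  ∃ h₁ ∈ pairSubgroup n, ∃ h₂ ∈ pairSubgroup n, v = h₁ * x * h₂

/-- The matrix attached to a double coset `HuH`: the `(i,j)` entry is
`#({2i, 2i+1} ∩ u({2j, 2j+1}))`. -/
noncomputable def cosetMatrix {n : ℕ} (u : Equiv.Perm (Fin (2 * n))) :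
    Matrix (Fin n) (Fin n) ℕ :=
  fun i j => Set.ncard { k : Fin (2 * n) | k.1 / 2 = j.1 ∧ (u k).1 / 2 = i.1 }

/-- The simple reflection `s_j = (j, j+1)` of `S_n` (zero-based). -/
def sRefl {n : ℕ} (j : {j : ℕ // j + 1 < n}) : Equiv.Perm (Fin n) :=
  Equiv.swap ⟨j.1, Nat.lt_of_succ_lt j.2⟩ ⟨j.1 + 1, j.2⟩

/-- A Boolean permutation: a product of distinct simple reflections. -/
def BooleanPerm {n : ℕ} (w : Equiv.Perm (Fin n)) : Prop :=
  ∃ js : List {j : ℕ // j + 1 < n}, (js.map Subtype.val).Nodup ∧ w = (js.map sRefl).prod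

/-- `w` avoids the pattern `(321)`. -/
def Avoids321 {n : ℕ} (w : Equiv.Perm (Fin n)) : Prop :=
  ¬ ∃ i j k : Fin n, i < j ∧ j < k ∧ w k < w j ∧ w j < w i

/-- `w` avoids the pattern `(3412)`. -/
def Avoids3412 {n : ℕ} (w : Equiv.Perm (Fin n)) : Prop :=
  ¬ ∃ i j k l : Fin n, i < j ∧ j < k ∧ k < l ∧ w k < w l ∧ w l < w i ∧ w i < w j

/-- `w` avoids the pattern `(4231)`. -/
def Avoids4231 {n : ℕ} (w : Equiv.Perm (Fin n)) : Prop :=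
  ¬ ∃ i j k l : Fin n, i < j ∧ j < k ∧ k < l ∧ w l < w j ∧ w j < w k ∧ w k < w i

/-- Hall's theorem step: a nonneg integer matrix with all row and column sums `k ≥ 1`
has a permutation in its support. -/
lemma exists_perm_le_aux {n k : ℕ} (hk : 0 < k) (A : Matrix (Fin n) (Fin n) ℕ)
    (hrow : ∀ i, ∑ j, A i j = k) (hcol : ∀ j, ∑ i, A i j = k) :
    ∃ σ : Equiv.Perm (Fin n), ∀ j, 1 ≤ A (σ j) j := by
  set t : Fin n → Finset (Fin n) := fun j => Finset.univ.filter (fun i => 1 ≤ A i j) with ht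
  have hall : ∀ s : Finset (Fin n), s.card ≤ (s.biUnion t).card := by
    intro s
    have h1 : k * s.card ≤ k * (s.biUnion t).card := by
      calc k * s.card = ∑ _j ∈ s, k := by rw [Finset.sum_const, smul_eq_mul, mul_comm]
        _ = ∑ j ∈ s, ∑ i ∈ s.biUnion t, A i j := by
            refine Finset.sum_congr rfl fun j hj => ?_
            rw [← hcol j]
            symm
            apply Finset.sum_subset (Finset.subset_univ _)
            intro i _ hi
            by_contra h
            exact hi (Finset.mem_biUnion.mpr ⟨j, hj, by simp [ht]; omega⟩)
        _ = ∑ i ∈ s.biUnion t, ∑ j ∈ s, A i j := Finset.sum_comm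
        _ ≤ ∑ i ∈ s.biUnion t, k := by
            refine Finset.sum_le_sum fun i _ => ?_
            rw [← hrow i]
            exact Finset.sum_le_sum_of_subset (Finset.subset_univ s)
        _ = k * (s.biUnion t).card := by rw [Finset.sum_const, smul_eq_mul, mul_comm]
    exact Nat.le_of_mul_le_mul_left h1 hk
  obtain ⟨f, hf, hft⟩ := (Finset.all_card_le_biUnion_card_iff_exists_injective t).mp hall
  refine ⟨Equiv.ofBijective f (Finite.injective_iff_bijective.mp hf), fun j => ?_⟩
  have := hft j
  simp [ht] at this
  exact this

/-- Every `n × n` matrix with non-negative integer entries, all of whose row sums and column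
sums equal `2`, is the sum of two permutation matrices. -/
theorem stmt8 (n : ℕ) (A : Matrix (Fin n) (Fin n) ℕ)
    (hrow : ∀ i, ∑ j, A i j = 2) (hcol : ∀ j, ∑ i, A i j = 2) :
    ∃ σ τ : Equiv.Perm (Fin n), ∀ i j,
      A i j = (if σ j = i then 1 else 0) + (if τ j = i then 1 else 0) := by
  obtain ⟨σ, hσ⟩ := exists_perm_le_aux (k := 2) (by norm_num) A hrow hcol
  set B : Matrix (Fin n) (Fin n) ℕ := fun i j => A i j - (if σ j = i then 1 else 0) with hB
  have hA : ∀ i j, A i j = (if σ j = i then 1 else 0) + B i j := by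
    intro i j
    by_cases h : σ j = i
    · have := hσ j
      subst h
      simp only [hB, if_pos rfl, eq_self_iff_true, if_true]
      omega
    · simp [hB, h]
  have hone : ∀ i, ∑ j, (if σ j = i then (1 : ℕ) else 0) = 1 := by
    intro i
    rw [Finset.sum_eq_single (σ⁻¹ i)]
    · simp
    · intro j _ hj
      rw [if_neg]
      intro h
      exact hj (by rw [← h]; simp)
    · simp
  have hrowB : ∀ i, ∑ j, B i j = 1 := by
    intro i
    have h2 := hrow i
    have h3 : ∑ j, A i j = ∑ j, ((if σ j = i then 1 else 0) + B i j) :=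
      Finset.sum_congr rfl fun j _ => hA i j
    rw [Finset.sum_add_distrib, hone i] at h3
    omega
  have hcolB : ∀ j, ∑ i, B i j = 1 := by
    intro j
    have h2 := hcol j
    have h3 : ∑ i, A i j = ∑ i, ((if σ j = i then 1 else 0) + B i j) :=
      Finset.sum_congr rfl fun i _ => hA i j
    rw [Finset.sum_add_distrib, Finset.sum_ite_eq Finset.univ (σ j) (fun _ => (1:ℕ))] at h3
    simp at h3
    omega
  obtain ⟨τ, hτ⟩ := exists_perm_le_aux (k := 1) (by norm_num) B hrowB hcolB
  refine ⟨σ, τ, fun i j => ?_⟩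
  rw [hA i j]
  congr 1
  -- show B i j = if τ j = i then 1 else 0
  have hs := hcolB j
  have h1 := hτ j
  by_cases h : τ j = i
  · subst h
    rw [if_pos rfl]
    have hle : B (τ j) j ≤ ∑ i, B i j :=
      Finset.single_le_sum (f := fun x => B x j) (fun _ _ => Nat.zero_le _) (Finset.mem_univ _)
    omega
  · rw [if_neg h]
    have hmem : τ j ∈ Finset.univ.erase i := Finset.mem_erase.mpr ⟨h, Finset.mem_univ _⟩
    have h2 : B (τ j) j ≤ ∑ x ∈ Finset.univ.erase i, B x j :=
      Finset.single_le_sum (f := fun x => B x j) (fun _ _ => Nat.zero_le _) hmem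
    have h3 : B i j + ∑ x ∈ Finset.univ.erase i, B x j = ∑ x, B x j :=
      Finset.add_sum_erase Finset.univ (fun x => B x j) (Finset.mem_univ i)
    omega
end

section
/- Let u ∈ K ∩ HxH for some x ∈ S_{2n}, and let r be the number of non-trivial cycles (cycles of length at least 2) of the permutation u_even⁻¹ · u_odd ∈ S_n. Then the cardinality of K ∩ HxH equals 2^r. -/
theorem Equiv.Perm.apply_inv_self {α : Type*} (f : Equiv.Perm α) (x : α) : f (f⁻¹ x) = x :=
  f.apply_symm_apply x

theorem Equiv.Perm.inv_apply_self {α : Type*} (f : Equiv.Perm α) (x : α) : f⁻¹ (f x) = x :=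
  f.symm_apply_apply x

namespace Stmt13Aux

open Equiv Equiv.Perm Finset

variable {n : ℕ}

def e0 (i : Fin n) : Fin (2 * n) := ⟨2 * i.1, by have := i.2; omega⟩

def e1 (i : Fin n) : Fin (2 * n) := ⟨2 * i.1 + 1, by have := i.2; omega⟩

lemma e0_val (i : Fin n) : (e0 i).1 = 2 * i.1 := rfl
lemma e1_val (i : Fin n) : (e1 i).1 = 2 * i.1 + 1 := rfl

lemma e0_inj {i j : Fin n} (h : e0 i = e0 j) : i = j := by
  have := congrArg Fin.val h
  rw [e0_val, e0_val] at this
  exact Fin.ext (by omega)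

lemma e1_inj {i j : Fin n} (h : e1 i = e1 j) : i = j := by
  have := congrArg Fin.val h
  rw [e1_val, e1_val] at this
  exact Fin.ext (by omega)

lemma e0_ne_e1 (i j : Fin n) : e0 i ≠ e1 j := by
  intro h
  have := congrArg Fin.val h
  rw [e0_val, e1_val] at this
  omega

lemma cases_ei (i : Fin (2 * n)) : (∃ j, i = e0 j) ∨ (∃ j, i = e1 j) := by
  have h2 := i.2
  by_cases h : i.1 % 2 = 0
  · exact Or.inl ⟨⟨i.1 / 2, by omega⟩, Fin.ext (by simp only [e0_val, Fin.val_mk]; omega)⟩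
  · exact Or.inr ⟨⟨i.1 / 2, by omega⟩, Fin.ext (by simp only [e1_val, Fin.val_mk]; omega)⟩

lemma eq_e0 {k : Fin (2 * n)} {m : Fin n} (h1 : k.1 / 2 = m.1) (h2 : k.1 % 2 = 0) :
    k = e0 m := Fin.ext (by rw [e0_val]; omega)

lemma eq_e1 {k : Fin (2 * n)} {m : Fin n} (h1 : k.1 / 2 = m.1) (h2 : k.1 % 2 = 1) :
    k = e1 m := Fin.ext (by rw [e1_val]; omega)

lemma half_cases {k : Fin (2 * n)} {j : Fin n} (h : k.1 / 2 = j.1) :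
    k = e0 j ∨ k = e1 j := by
  by_cases h2 : k.1 % 2 = 0
  · exact Or.inl (eq_e0 h h2)
  · exact Or.inr (eq_e1 h (by omega))

lemma pairFinEquiv_e0 (j : Fin n) : pairFinEquiv n (j, 0) = e0 j := Fin.ext (by
  show 2 * j.1 + 0 = 2 * j.1; omega)

lemma pairFinEquiv_e1 (j : Fin n) : pairFinEquiv n (j, 1) = e1 j := rfl

/-- The permutation flipping the two entries of the `j`-th pair, for `j ∈ T`. -/
def flipT (T : Finset (Fin n)) : Equiv.Perm (Fin (2 * n)) :=
  (pairFinEquiv n).permCongr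
    (Equiv.prodShear (Equiv.refl (Fin n))
      (fun j => if j ∈ T then Equiv.swap (0 : Fin 2) 1 else Equiv.refl (Fin 2)))

lemma flipT_pair (T : Finset (Fin n)) (j : Fin n) (p : Fin 2) :
    flipT T (pairFinEquiv n (j, p)) =
      pairFinEquiv n (j, if j ∈ T then Equiv.swap (0 : Fin 2) 1 p else p) := by
  unfold flipT
  rw [Equiv.permCongr_apply, Equiv.symm_apply_apply]
  rcases em (j ∈ T) with h | h <;> simp [Equiv.prodShear, h]

lemma flipT_e0_mem {T : Finset (Fin n)} {j : Fin n} (h : j ∈ T) :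
    flipT T (e0 j) = e1 j := by
  rw [← pairFinEquiv_e0, flipT_pair, if_pos h]
  simp [pairFinEquiv_e1]

lemma flipT_e0_not {T : Finset (Fin n)} {j : Fin n} (h : j ∉ T) :
    flipT T (e0 j) = e0 j := by
  rw [← pairFinEquiv_e0, flipT_pair, if_neg h]

lemma flipT_e1_mem {T : Finset (Fin n)} {j : Fin n} (h : j ∈ T) :
    flipT T (e1 j) = e0 j := by
  rw [← pairFinEquiv_e1, flipT_pair, if_pos h]
  simp [pairFinEquiv_e0]

lemma flipT_e1_not {T : Finset (Fin n)} {j : Fin n} (h : j ∉ T) :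
    flipT T (e1 j) = e1 j := by
  rw [← pairFinEquiv_e1, flipT_pair, if_neg h]

lemma flipT_mem_pairSubgroup (T : Finset (Fin n)) : flipT T ∈ pairSubgroup n := by
  intro i
  rcases cases_ei i with ⟨j, rfl⟩ | ⟨j, rfl⟩
  · rcases em (j ∈ T) with h | h
    · rw [flipT_e0_mem h, e1_val, e0_val]; omega
    · rw [flipT_e0_not h]
  · rcases em (j ∈ T) with h | h
    · rw [flipT_e1_mem h, e0_val, e1_val]; omega
    · rw [flipT_e1_not h]


/-- Invariant subsets of the support of `c`. -/
def Pinv {α : Type*} (c : Equiv.Perm α) (T : Finset α) : Prop :=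
  ∀ j ∈ T, c j ≠ j ∧ c j ∈ T ∧ c⁻¹ j ∈ T

section Count

variable {α : Type*} [Fintype α] [DecidableEq α]

lemma pinv_pow {c : Equiv.Perm α} {T : Finset α} (hT : Pinv c T) :
    ∀ (k : ℕ), ∀ j ∈ T, (c ^ k) j ∈ T := by
  intro k
  induction k with
  | zero => simpa using fun j h => h
  | succ k ih =>
    intro j hj
    rw [pow_succ, Equiv.Perm.mul_apply]
    exact ih _ (hT j hj).2.1

lemma pinv_sameCycle {c : Equiv.Perm α} {T : Finset α} (hT : Pinv c T) {j y : α}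
    (hj : j ∈ T) (h : c.SameCycle j y) : y ∈ T := by
  obtain ⟨k, -, hk⟩ := h.exists_pow_eq'
  exact hk ▸ pinv_pow hT k j hj

lemma pinv_G (c : Equiv.Perm α) (F : Finset {g : Equiv.Perm α // g ∈ c.cycleFactorsFinset}) :
    Pinv c (Finset.univ.filter (fun j => ∃ g ∈ F, j ∈ (g : Equiv.Perm α).support)) := by
  intro j hj
  simp only [Finset.mem_filter, Finset.mem_univ, true_and] at hj ⊢
  obtain ⟨g, hgF, hjg⟩ := hj
  obtain ⟨hcyc, hval⟩ := Equiv.Perm.mem_cycleFactorsFinset_iff.mp g.2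
  have h1 : c j = (g : Equiv.Perm α) j := (hval j hjg).symm
  have hj' : (g : Equiv.Perm α)⁻¹ j ∈ (g : Equiv.Perm α).support := by
    have h2 := Equiv.Perm.apply_mem_support (f := (g : Equiv.Perm α))
      (x := (g : Equiv.Perm α)⁻¹ j)
    rw [Equiv.Perm.apply_inv_self] at h2
    exact h2.mp hjg
  refine ⟨?_, ⟨g, hgF, ?_⟩, ⟨g, hgF, ?_⟩⟩
  · rw [h1]; exact Equiv.Perm.mem_support.mp hjg
  · rw [h1]; exact Equiv.Perm.apply_mem_support.mpr hjg
  · have h3 : c ((g : Equiv.Perm α)⁻¹ j) = j := by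
      rw [← hval _ hj', Equiv.Perm.apply_inv_self]
    have h4 : c⁻¹ j = (g : Equiv.Perm α)⁻¹ j := by
      conv_lhs => rw [← h3, Equiv.Perm.inv_apply_self]
    rw [h4]; exact hj'

lemma card_pinv (c : Equiv.Perm α) :
    Nat.card {T : Finset α // Pinv c T} = 2 ^ Multiset.card c.cycleType := by
  classical
  have e : {T : Finset α // Pinv c T} ≃ Finset {g : Equiv.Perm α // g ∈ c.cycleFactorsFinset} :=
    { toFun := fun T => Finset.univ.filter (fun g => (g : Equiv.Perm α).support ⊆ T.1)
      invFun := fun F =>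
        ⟨Finset.univ.filter (fun j => ∃ g ∈ F, j ∈ (g : Equiv.Perm α).support), pinv_G c F⟩
      left_inv := by
        rintro ⟨T, hT⟩
        apply Subtype.ext
        dsimp only
        ext j
        rw [Finset.mem_filter]
        simp only [Finset.mem_univ, true_and]
        constructor
        · rintro ⟨g, hgF, hjg⟩
          rw [Finset.mem_filter] at hgF
          exact hgF.2 hjg
        · intro hj
          have h1 := hT j hj
          have hjs : j ∈ c.support := Equiv.Perm.mem_support.mpr h1.1
          refine ⟨⟨c.cycleOf j, Equiv.Perm.cycleOf_mem_cycleFactorsFinset_iff.mpr hjs⟩, ?_, ?_⟩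
          · rw [Finset.mem_filter]
            refine ⟨Finset.mem_univ _, ?_⟩
            intro y hy
            rw [Equiv.Perm.mem_support_cycleOf_iff] at hy
            exact pinv_sameCycle hT hj hy.1
          · rw [Equiv.Perm.mem_support_cycleOf_iff]
            exact ⟨Equiv.Perm.SameCycle.refl _ _, hjs⟩
      right_inv := by
        intro F
        dsimp only
        ext g
        rw [Finset.mem_filter]
        simp only [Finset.mem_univ, true_and]
        constructor
        · intro hsub
          have hc : (g : Equiv.Perm α).IsCycle :=
            (Equiv.Perm.mem_cycleFactorsFinset_iff.mp g.2).1
          obtain ⟨x, hx1, -⟩ := hc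
          have hxs : x ∈ (g : Equiv.Perm α).support := Equiv.Perm.mem_support.mpr hx1
          have hx2 := hsub hxs
          rw [Finset.mem_filter] at hx2
          obtain ⟨-, g', hg'F, hxg'⟩ := hx2
          have hgg : g = g' := by
            apply Subtype.ext
            rw [Equiv.Perm.cycle_is_cycleOf hxs g.2, Equiv.Perm.cycle_is_cycleOf hxg' g'.2]
          rwa [hgg]
        · intro hgF y hy
          rw [Finset.mem_filter]
          exact ⟨Finset.mem_univ _, g, hgF, hy⟩ }
  rw [Nat.card_congr e, Nat.card_eq_fintype_card, Fintype.card_finset, Fintype.card_coe]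
  congr 1
  simp [Equiv.Perm.cycleType_def, Multiset.card_map]

end Count

section Main

variable (a b : Equiv.Perm (Fin n)) (u : Equiv.Perm (Fin (2 * n)))

lemma c_apply (j : Fin n) : (b⁻¹ * a) j = b⁻¹ (a j) := rfl

lemma c_inv_apply (j : Fin n) : (b⁻¹ * a)⁻¹ j = a⁻¹ (b j) := by
  rw [mul_inv_rev, inv_inv, Equiv.Perm.mul_apply]

lemma c_ne_iff (j : Fin n) : (b⁻¹ * a) j ≠ j ↔ a j ≠ b j := by
  rw [c_apply, not_iff_not, Equiv.Perm.inv_eq_iff_eq]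

variable {a b}

lemma b_mem_image {T : Finset (Fin n)} (hT : Pinv (b⁻¹ * a) T) {j : Fin n} (hj : j ∈ T) :
    b j ∈ T.image a := by
  refine Finset.mem_image.mpr ⟨(b⁻¹ * a)⁻¹ j, (hT j hj).2.2, ?_⟩
  rw [c_inv_apply, Equiv.Perm.apply_inv_self]

lemma b_not_mem_image {T : Finset (Fin n)} (hT : Pinv (b⁻¹ * a) T) {j : Fin n} (hj : j ∉ T) :
    b j ∉ T.image a := by
  rintro hmem
  obtain ⟨t, htT, hat⟩ := Finset.mem_image.mp hmem
  have h1 : (b⁻¹ * a) t = j := by rw [c_apply, hat, Equiv.Perm.inv_apply_self]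
  exact hj (h1 ▸ (hT t htT).2.1)

lemma a_mem_image {T : Finset (Fin n)} {j : Fin n} (hj : j ∈ T) : a j ∈ T.image a :=
  Finset.mem_image.mpr ⟨j, hj, rfl⟩

lemma a_not_mem_image {T : Finset (Fin n)} {j : Fin n} (hj : j ∉ T) : a j ∉ T.image a := by
  rintro hmem
  obtain ⟨t, htT, hat⟩ := Finset.mem_image.mp hmem
  exact hj (a.injective hat ▸ htT)

/-- The candidate element of `K ∩ HuH` attached to an invariant set `T`. -/
def vT (T : Finset (Fin n)) : Equiv.Perm (Fin (2 * n)) :=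
  flipT (T.image a) * u * flipT T

variable {u}
variable (ha0 : ∀ i, u (e0 i) = e0 (a i)) (hb1 : ∀ i, u (e1 i) = e1 (b i))

section
include ha0 hb1

lemma vT_e0_mem {T : Finset (Fin n)} (hT : Pinv (b⁻¹ * a) T) {j : Fin n} (hj : j ∈ T) :
    vT (a := a) u T (e0 j) = e0 (b j) := by
  show flipT (T.image a) (u (flipT T (e0 j))) = e0 (b j)
  rw [flipT_e0_mem hj, hb1, flipT_e1_mem (b_mem_image hT hj)]

lemma vT_e0_not {T : Finset (Fin n)} {j : Fin n} (hj : j ∉ T) :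
    vT (a := a) u T (e0 j) = e0 (a j) := by
  show flipT (T.image a) (u (flipT T (e0 j))) = e0 (a j)
  rw [flipT_e0_not hj, ha0, flipT_e0_not (a_not_mem_image hj)]

lemma vT_e1_mem {T : Finset (Fin n)} {j : Fin n} (hj : j ∈ T) :
    vT (a := a) u T (e1 j) = e1 (a j) := by
  show flipT (T.image a) (u (flipT T (e1 j))) = e1 (a j)
  rw [flipT_e1_mem hj, ha0, flipT_e0_mem (a_mem_image hj)]

lemma vT_e1_not {T : Finset (Fin n)} (hT : Pinv (b⁻¹ * a) T) {j : Fin n} (hj : j ∉ T) :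
    vT (a := a) u T (e1 j) = e1 (b j) := by
  show flipT (T.image a) (u (flipT T (e1 j))) = e1 (b j)
  rw [flipT_e1_not hj, hb1, flipT_e1_not (b_not_mem_image hT hj)]

lemma vT_parity {T : Finset (Fin n)} (hT : Pinv (b⁻¹ * a) T) :
    vT (a := a) u T ∈ paritySubgroup n := by
  intro i
  rcases cases_ei i with ⟨j, rfl⟩ | ⟨j, rfl⟩
  · rcases em (j ∈ T) with h | h
    · rw [vT_e0_mem ha0 hb1 hT h, e0_val, e0_val]; omega
    · rw [vT_e0_not ha0 hb1 h, e0_val, e0_val]; omega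
  · rcases em (j ∈ T) with h | h
    · rw [vT_e1_mem ha0 hb1 h, e1_val, e1_val]; omega
    · rw [vT_e1_not ha0 hb1 hT h, e1_val, e1_val]; omega

lemma vT_coset (T : Finset (Fin n)) : InPairDoubleCoset u (vT (a := a) u T) :=
  ⟨flipT (T.image a), flipT_mem_pairSubgroup _, flipT T, flipT_mem_pairSubgroup _, rfl⟩

/-- The key decomposition: any parity-preserving element of `HuH` acts on each pair
either like `(a, b)` or like `(b, a)`. -/
lemma decomp {v : Equiv.Perm (Fin (2 * n))} (hvK : v ∈ paritySubgroup n)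
    (hvC : InPairDoubleCoset u v) (j : Fin n) :
    (v (e0 j) = e0 (a j) ∧ v (e1 j) = e1 (b j)) ∨
    (v (e0 j) = e0 (b j) ∧ v (e1 j) = e1 (a j)) := by
  obtain ⟨h₁, m₁, h₂, m₂, rfl⟩ := hvC
  have happ : ∀ z, (h₁ * u * h₂) z = h₁ (u (h₂ z)) := fun _ => rfl
  have par0 : ((h₁ * u * h₂) (e0 j)).1 % 2 = 0 := by
    rw [hvK (e0 j), e0_val]; omega
  have par1 : ((h₁ * u * h₂) (e1 j)).1 % 2 = 1 := by
    rw [hvK (e1 j), e1_val]; omega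
  have fin0 : ∀ m : Fin n, (u (h₂ (e0 j)) = e0 m ∨ u (h₂ (e0 j)) = e1 m) →
      (h₁ * u * h₂) (e0 j) = e0 m := by
    intro m hm
    refine eq_e0 ?_ par0
    rw [happ, m₁ (u (h₂ (e0 j)))]
    rcases hm with hm | hm <;> rw [hm]
    · rw [e0_val]; omega
    · rw [e1_val]; omega
  have fin1 : ∀ m : Fin n, (u (h₂ (e1 j)) = e0 m ∨ u (h₂ (e1 j)) = e1 m) →
      (h₁ * u * h₂) (e1 j) = e1 m := by
    intro m hm
    refine eq_e1 ?_ par1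
    rw [happ, m₁ (u (h₂ (e1 j)))]
    rcases hm with hm | hm <;> rw [hm]
    · rw [e0_val]; omega
    · rw [e1_val]; omega
  have half0 : (h₂ (e0 j)).1 / 2 = j.1 := by rw [m₂ (e0 j), e0_val]; omega
  have half1 : (h₂ (e1 j)).1 / 2 = j.1 := by rw [m₂ (e1 j), e1_val]; omega
  rcases half_cases half0 with h0 | h0
  · have h1e : h₂ (e1 j) = e1 j := by
      rcases half_cases half1 with h1 | h1
      · exact absurd (h₂.injective (h0.trans h1.symm)) (fun hh => e0_ne_e1 j j hh)
      · exact h1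
    refine Or.inl ⟨?_, ?_⟩
    · exact fin0 (a j) (Or.inl (by rw [h0, ha0]))
    · exact fin1 (b j) (Or.inr (by rw [h1e, hb1]))
  · have h1e : h₂ (e1 j) = e0 j := by
      rcases half_cases half1 with h1 | h1
      · exact h1
      · exact absurd (h₂.injective (h0.trans h1.symm)) (fun hh => e0_ne_e1 j j hh)
    refine Or.inr ⟨?_, ?_⟩
    · exact fin0 (b j) (Or.inr (by rw [h0, hb1]))
    · exact fin1 (a j) (Or.inl (by rw [h1e, ha0]))

end

variable (a b) in
/-- The invariant set attached to `v ∈ K ∩ HuH`. -/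
def Tv (v : Equiv.Perm (Fin (2 * n))) : Finset (Fin n) :=
  Finset.univ.filter (fun j => a j ≠ b j ∧ v (e0 j) = e0 (b j))

lemma mem_Tv {v : Equiv.Perm (Fin (2 * n))} {j : Fin n} :
    j ∈ Tv a b v ↔ a j ≠ b j ∧ v (e0 j) = e0 (b j) := by
  simp [Tv]

section
variable {v : Equiv.Perm (Fin (2 * n))}
  (hd : ∀ j, (v (e0 j) = e0 (a j) ∧ v (e1 j) = e1 (b j)) ∨
    (v (e0 j) = e0 (b j) ∧ v (e1 j) = e1 (a j)))
include hd

lemma eval_not_mem {j : Fin n} (hj : j ∉ Tv a b v) :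
    v (e0 j) = e0 (a j) ∧ v (e1 j) = e1 (b j) := by
  rw [mem_Tv] at hj
  push_neg at hj
  rcases hd j with h | h
  · exact h
  · by_cases hab : a j = b j
    · exact ⟨by rw [h.1, hab], by rw [h.2, hab]⟩
    · exact absurd h.1 (hj hab)

lemma eval_mem {j : Fin n} (hj : j ∈ Tv a b v) :
    v (e0 j) = e0 (b j) ∧ v (e1 j) = e1 (a j) ∧ a j ≠ b j := by
  rw [mem_Tv] at hj
  obtain ⟨hne, h0⟩ := hj
  rcases hd j with h | h
  · exact absurd (e0_inj (h.1.symm.trans h0)) hne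
  · exact ⟨h0, h.2, hne⟩

lemma Tv_pinv : Pinv (b⁻¹ * a) (Tv a b v) := by
  intro j hj
  obtain ⟨h0, h1, hne⟩ := eval_mem hd hj
  refine ⟨(c_ne_iff a b j).mpr hne, ?_, ?_⟩
  · by_contra hnot
    have hev := eval_not_mem hd hnot
    have h2 : v (e1 ((b⁻¹ * a) j)) = e1 (a j) := by
      rw [hev.2, c_apply, Equiv.Perm.apply_inv_self]
    have h3 := e1_inj (v.injective (h2.trans h1.symm))
    exact (c_ne_iff a b j).mpr hne h3
  · by_contra hnot
    have hev := eval_not_mem hd hnot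
    have h2 : v (e0 ((b⁻¹ * a)⁻¹ j)) = e0 (b j) := by
      rw [hev.1, c_inv_apply, Equiv.Perm.apply_inv_self]
    have h3 := e0_inj (v.injective (h2.trans h0.symm))
    have h4 : (b⁻¹ * a) j = j := by
      conv_lhs => rw [← h3]
      rw [Equiv.Perm.apply_inv_self]
    exact (c_ne_iff a b j).mpr hne h4

end

include ha0 hb1 in
lemma main_count :
    {v : Equiv.Perm (Fin (2 * n)) | v ∈ paritySubgroup n ∧ InPairDoubleCoset u v}.ncard
      = 2 ^ Multiset.card (b⁻¹ * a).cycleType := by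
  classical
  rw [← Nat.card_coe_set_eq]
  have E : {v : Equiv.Perm (Fin (2 * n)) // v ∈ paritySubgroup n ∧ InPairDoubleCoset u v}
      ≃ {T : Finset (Fin n) // Pinv (b⁻¹ * a) T} :=
    { toFun := fun v => ⟨Tv a b v.1, Tv_pinv (decomp ha0 hb1 v.2.1 v.2.2)⟩
      invFun := fun T => ⟨vT (a := a) u T.1, vT_parity ha0 hb1 T.2, vT_coset ha0 hb1 T.1⟩
      left_inv := by
        rintro ⟨v, hvK, hvC⟩
        have hd := decomp ha0 hb1 hvK hvC
        apply Subtype.ext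
        dsimp only
        apply Equiv.ext
        intro i
        have hT := Tv_pinv hd
        rcases cases_ei i with ⟨j, rfl⟩ | ⟨j, rfl⟩
        · rcases em (j ∈ Tv a b v) with h | h
          · rw [vT_e0_mem ha0 hb1 hT h, (eval_mem hd h).1]
          · rw [vT_e0_not ha0 hb1 h, (eval_not_mem hd h).1]
        · rcases em (j ∈ Tv a b v) with h | h
          · rw [vT_e1_mem ha0 hb1 h, (eval_mem hd h).2.1]
          · rw [vT_e1_not ha0 hb1 hT h, (eval_not_mem hd h).2]
      right_inv := by
        rintro ⟨T, hT⟩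
        apply Subtype.ext
        dsimp only
        ext j
        rw [mem_Tv]
        constructor
        · rintro ⟨hne, h0⟩
          by_contra hnot
          rw [vT_e0_not ha0 hb1 hnot] at h0
          exact hne (e0_inj h0)
        · intro hj
          exact ⟨(c_ne_iff a b j).mp (hT j hj).1, vT_e0_mem ha0 hb1 hT hj⟩ }
  exact (Nat.card_congr E).trans (card_pinv (b⁻¹ * a))

end Main

lemma coset_swap {x u v : Equiv.Perm (Fin (2 * n))} (hx : InPairDoubleCoset x u) :
    (InPairDoubleCoset x v ↔ InPairDoubleCoset u v) := by
  obtain ⟨h₁, m₁, h₂, m₂, rfl⟩ := hx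
  constructor
  · rintro ⟨k₁, n₁, k₂, n₂, rfl⟩
    exact ⟨k₁ * h₁⁻¹, mul_mem n₁ (inv_mem m₁), h₂⁻¹ * k₂, mul_mem (inv_mem m₂) n₂, by group⟩
  · rintro ⟨k₁, n₁, k₂, n₂, rfl⟩
    exact ⟨k₁ * h₁, mul_mem n₁ m₁, h₂ * k₂, mul_mem m₂ n₂, by group⟩

end Stmt13Aux

/-- If `u ∈ K ∩ HxH` has odd part `a` and even part `b`, and `r` is the number of
non-trivial cycles of `b⁻¹ * a`, then `#(K ∩ HxH) = 2^r`. -/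
theorem stmt13 (n : ℕ) (x u : Equiv.Perm (Fin (2 * n))) (a b : Equiv.Perm (Fin n))
    (hu : u ∈ paritySubgroup n) (hx : InPairDoubleCoset x u)
    (hab : ∀ i : Fin n,
      u ⟨2 * i.1, by have := i.2; omega⟩
          = ⟨2 * (a i).1, by have := (a i).2; omega⟩ ∧
      u ⟨2 * i.1 + 1, by have := i.2; omega⟩
          = ⟨2 * (b i).1 + 1, by have := (b i).2; omega⟩)
 :
    Set.ncard {v : Equiv.Perm (Fin (2 * n)) | v ∈ paritySubgroup n ∧ InPairDoubleCoset x v}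
      = 2 ^ Multiset.card (Equiv.Perm.cycleType (b⁻¹ * a)) := by
  have hset : {v : Equiv.Perm (Fin (2 * n)) | v ∈ paritySubgroup n ∧ InPairDoubleCoset x v}
      = {v : Equiv.Perm (Fin (2 * n)) | v ∈ paritySubgroup n ∧ InPairDoubleCoset u v} := by
    ext v
    exact and_congr_right fun _ => Stmt13Aux.coset_swap hx
  rw [hset]
  exact Stmt13Aux.main_count (fun i => (hab i).1) (fun i => (hab i).2)
end

section
/- Let w = s_{j_1}···s_{j_l} ∈ S_n be a Boolean permutation, with j_1,...,j_l distinct. Then the map x ↦ I_x = {i ∈ {1,...,l} : s_{j_i} ≤ x} is a bijection between the Bruhat interval {x ∈ S_n : x ≤ w} and the power set of {1,...,l}. In particular, the interval {x : x ≤ w} has exactly 2^{ℓ(w)} elements. -/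
namespace BoolAux

open Equiv Set

variable {n : ℕ}

def Invs (u : Equiv.Perm (Fin n)) : Set (Fin n × Fin n) :=
  { p : Fin n × Fin n | p.1 < p.2 ∧ u p.2 < u p.1 }

lemma invLength_eq (u : Equiv.Perm (Fin n)) : invLength u = (Invs u).ncard := rfl

lemma invs_finite (u : Equiv.Perm (Fin n)) : (Invs u).Finite := Set.toFinite _

lemma invLength_one : invLength (1 : Equiv.Perm (Fin n)) = 0 := by
  rw [invLength_eq]
  convert Set.ncard_empty (Fin n × Fin n)
  ext ⟨x, y⟩
  simp only [Invs, Set.mem_setOf_eq, Equiv.Perm.one_apply, Set.mem_empty_iff_false, iff_false]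
  rintro ⟨h1, h2⟩; exact absurd h1 (not_lt.2 h2.le)

lemma ncard_invs_le_inv (u : Equiv.Perm (Fin n)) : (Invs u).ncard ≤ (Invs u⁻¹).ncard := by
  apply Set.ncard_le_ncard_of_injOn (fun z => (u z.2, u z.1))
  · rintro ⟨x, y⟩ ⟨h1, h2⟩
    refine ⟨h2, ?_⟩
    simpa using h1
  · rintro ⟨x, y⟩ _ ⟨x', y'⟩ _ h
    simp only [Prod.mk.injEq, EmbeddingLike.apply_eq_iff_eq] at h
    exact Prod.ext h.2 h.1

lemma invLength_inv (u : Equiv.Perm (Fin n)) : invLength u⁻¹ = invLength u := by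
  rw [invLength_eq, invLength_eq]
  exact le_antisymm (by simpa using ncard_invs_le_inv u⁻¹) (ncard_invs_le_inv u)

/-- Key lemma: multiplying on the right by a transposition `swap p q` with `u p < u q`
strictly increases the inversion number. -/
lemma invLength_lt_mul_swap {u : Equiv.Perm (Fin n)} {p q : Fin n} (hpq : p < q)
    (h : u p < u q) : invLength u < invLength (u * Equiv.swap p q) := by
  set u' := u * Equiv.swap p q with hu'
  have hup : u' p = u q := by simp [hu', Equiv.Perm.mul_apply]
  have huq : u' q = u p := by simp [hu', Equiv.Perm.mul_apply]
  have huo : ∀ x : Fin n, x ≠ p → x ≠ q → u' x = u x := by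
    intro x hxp hxq
    simp [hu', Equiv.Perm.mul_apply, Equiv.swap_apply_of_ne_of_ne hxp hxq]
  have hpq' : (p, q) ∈ Invs u' := ⟨hpq, by rw [hup, huq]; exact h⟩
  have hstep : (Invs u).ncard ≤ (Invs u' \ {(p, q)}).ncard := by
    set F : Fin n × Fin n → Fin n × Fin n :=
      fun z => if z.1 = q ∧ u p < u z.2 then (p, z.2)
        else if z.2 = p ∧ u z.1 < u q then (z.1, q) else z with hF
    set G : Fin n × Fin n → Fin n × Fin n :=
      fun z => if z.1 = p ∧ u p < u z.2 then (q, z.2)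
        else if z.2 = q ∧ u z.1 < u q then (z.1, p) else z with hG
    have hGF : ∀ z ∈ Invs u, G (F z) = z := by
      rintro ⟨x, y⟩ ⟨hxy, hvy⟩
      simp only [Set.mem_setOf_eq] at hxy hvy
      by_cases h1 : x = q ∧ u p < u y
      · rw [hF]; dsimp only; rw [if_pos h1, hG]; dsimp only
        rw [if_pos ⟨rfl, h1.2⟩, ← h1.1]
      · rw [hF]; dsimp only; rw [if_neg h1]
        by_cases h2 : y = p ∧ u x < u q
        · rw [if_pos h2, hG]; dsimp only
          have hxp : x ≠ p := h2.1 ▸ ne_of_lt hxy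
          rw [if_neg (fun hc => hxp hc.1), if_pos ⟨rfl, h2.2⟩, ← h2.1]
        · rw [if_neg h2, hG]; dsimp only
          have c1 : ¬(x = p ∧ u p < u y) := by
            rintro ⟨rfl, hc⟩; exact absurd hvy (not_lt.2 hc.le)
          have c2 : ¬(y = q ∧ u x < u q) := by
            rintro ⟨rfl, hc⟩; exact absurd hvy (not_lt.2 hc.le)
          rw [if_neg c1, if_neg c2]
    apply Set.ncard_le_ncard_of_injOn F
    · rintro ⟨x, y⟩ hz
      obtain ⟨hxy, hvy⟩ := hz
      simp only [Set.mem_setOf_eq] at hxy hvy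
      rw [hF]; dsimp only
      by_cases h1 : x = q ∧ u p < u y
      · rw [if_pos h1]
        obtain ⟨ha, hb⟩ := h1
        have hqy : q < y := ha ▸ hxy
        have hyq : y ≠ q := ne_of_gt hqy
        have hyp : y ≠ p := ne_of_gt (hpq.trans hqy)
        refine ⟨⟨hpq.trans hqy, ?_⟩, ?_⟩
        · rw [hup, huo y hyp hyq, ← ha]; exact hvy
        · simp only [Set.mem_singleton_iff, Prod.mk.injEq, not_and]
          intro _; exact hyq
      · rw [if_neg h1]
        by_cases h2 : y = p ∧ u x < u q
        · rw [if_pos h2]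
          obtain ⟨ha, hb⟩ := h2
          have hxp : x < p := ha ▸ hxy
          have hxp' : x ≠ p := ne_of_lt hxp
          have hxq : x ≠ q := ne_of_lt (hxp.trans hpq)
          refine ⟨⟨hxp.trans hpq, ?_⟩, ?_⟩
          · rw [huq, huo x hxp' hxq, ← ha]; exact hvy
          · simp only [Set.mem_singleton_iff, Prod.mk.injEq, not_and]
            intro hc; exact absurd hc hxp'
        · rw [if_neg h2]
          push_neg at h1 h2
          rcases eq_or_ne x q with hxq | hxq
          · -- x = q, so u y ≤ u p
            have hle : u y ≤ u p := h1 hxq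
            have hqy : q < y := hxq ▸ hxy
            have hyp : y ≠ p := ne_of_gt (hpq.trans hqy)
            have huyp : u y ≠ u p := fun hc => hyp (u.injective hc)
            refine ⟨⟨hxy, ?_⟩, ?_⟩
            · rw [hxq, huq, huo y hyp (ne_of_gt hqy)]
              exact lt_of_le_of_ne hle huyp
            · simp only [Set.mem_singleton_iff, Prod.mk.injEq, not_and]
              intro hc; exact absurd (hxq ▸ hc : q = p) hpq.ne'
          · rcases eq_or_ne y p with hyp | hyp
            · have hxp : x < p := hyp ▸ hxy
              have hle : u q ≤ u x := h2 hyp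
              have huxq : u x ≠ u q := fun hc => hxq (u.injective hc)
              refine ⟨⟨hxy, ?_⟩, ?_⟩
              · rw [hyp, hup, huo x (ne_of_lt hxp) hxq]
                exact lt_of_le_of_ne hle (Ne.symm huxq)
              · simp only [Set.mem_singleton_iff, Prod.mk.injEq, not_and]
                intro _ hc; exact absurd (hyp ▸ hc : p = q) hpq.ne
            · rcases eq_or_ne x p with hxp | hxp
              · have hyq : y ≠ q := by
                  intro hc
                  rw [hxp, hc] at hvy
                  exact absurd h (not_lt.2 hvy.le)
                refine ⟨⟨hxy, ?_⟩, ?_⟩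
                · rw [hxp, hup, huo y hyp hyq]
                  exact hvy.trans (hxp ▸ h)
                · simp only [Set.mem_singleton_iff, Prod.mk.injEq, not_and]
                  intro _; exact hyq
              · rcases eq_or_ne y q with hyq | hyq
                · refine ⟨⟨hxy, ?_⟩, ?_⟩
                  · rw [hyq, huq, huo x hxp hxq]
                    exact h.trans (hyq ▸ hvy)
                  · simp only [Set.mem_singleton_iff, Prod.mk.injEq, not_and]
                    intro hc; exact absurd hc hxp
                · refine ⟨⟨hxy, ?_⟩, ?_⟩
                  · rw [huo y hyp hyq, huo x hxp hxq]; exact hvy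
                  · simp only [Set.mem_singleton_iff, Prod.mk.injEq, not_and]
                    intro hc; exact absurd hc hxp
    · intro a ha b hb hab
      rw [← hGF a ha, ← hGF b hb, hab]
  calc invLength u ≤ (Invs u' \ {(p, q)}).ncard := hstep
    _ < (Invs u').ncard := Set.ncard_diff_singleton_lt_of_mem hpq' (invs_finite _)
lemma invLength_mul_swap_lt {u : Equiv.Perm (Fin n)} {p q : Fin n} (hpq : p < q)
    (h : u q < u p) : invLength (u * Equiv.swap p q) < invLength u := by
  have h2 : (u * Equiv.swap p q) p < (u * Equiv.swap p q) q := by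
    simp only [Equiv.Perm.mul_apply, Equiv.swap_apply_left, Equiv.swap_apply_right]
    exact h
  have := invLength_lt_mul_swap hpq h2
  rwa [mul_assoc, Equiv.swap_mul_self, mul_one] at this

lemma lt_of_invLength_mul_swap_lt {u : Equiv.Perm (Fin n)} {p q : Fin n} (hpq : p < q)
    (h : invLength (u * Equiv.swap p q) < invLength u) : u q < u p := by
  rcases lt_trichotomy (u p) (u q) with hc | hc | hc
  · exact absurd (invLength_lt_mul_swap hpq hc) (by omega)
  · exact absurd (u.injective hc) (ne_of_lt hpq)
  · exact hc

lemma adj_swap_lt {a b x y : Fin n} (hab : (b : ℕ) = (a : ℕ) + 1) (hxy : x < y)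
    (hne : ¬(x = a ∧ y = b)) : Equiv.swap a b x < Equiv.swap a b y := by
  rw [Fin.lt_def] at hxy ⊢
  by_cases hxa : x = a
  · by_cases hyb : y = b
    · exact absurd ⟨hxa, hyb⟩ hne
    · have hya : y ≠ a := fun hc => by rw [hxa, hc] at hxy; omega
      have hyb' : (y : ℕ) ≠ (b : ℕ) := fun hc => hyb (Fin.ext hc)
      rw [hxa, Equiv.swap_apply_left, Equiv.swap_apply_of_ne_of_ne hya hyb]
      rw [hxa] at hxy; omega
  · by_cases hxb : x = b
    · have hya : y ≠ a := fun hc => by rw [hxb, hc] at hxy; omega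
      have hyb : y ≠ b := fun hc => by rw [hxb, hc] at hxy; omega
      rw [hxb, Equiv.swap_apply_right, Equiv.swap_apply_of_ne_of_ne hya hyb]
      rw [hxb] at hxy; omega
    · rw [Equiv.swap_apply_of_ne_of_ne hxa hxb]
      have hxa' : (x : ℕ) ≠ (a : ℕ) := fun hc => hxa (Fin.ext hc)
      have hxb' : (x : ℕ) ≠ (b : ℕ) := fun hc => hxb (Fin.ext hc)
      by_cases hya : y = a
      · rw [hya, Equiv.swap_apply_left]
        rw [hya] at hxy; omega
      · by_cases hyb : y = b
        · rw [hyb, Equiv.swap_apply_right]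
          rw [hyb] at hxy; omega
        · rw [Equiv.swap_apply_of_ne_of_ne hya hyb]; exact hxy

lemma invLength_mul_adj {u : Equiv.Perm (Fin n)} {a b : Fin n} (hab : (b : ℕ) = (a : ℕ) + 1)
    (h : u a < u b) : invLength (u * Equiv.swap a b) = invLength u + 1 := by
  set s := Equiv.swap a b with hs
  set u' := u * s with hu'
  have hab' : a < b := by rw [Fin.lt_def]; omega
  have happ : ∀ x, u' x = u (s x) := fun x => rfl
  have hss : ∀ x, s (s x) = x := fun x => Equiv.swap_apply_self a b x
  have habne : (a, b) ∉ Invs u := fun hc => absurd h (not_lt.2 hc.2.le)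
  have hGF : ∀ z : Fin n × Fin n, z.1 < z.2 →
      (if z = (a, b) then z else (s z.1, s z.2)) = (a, b) → z = (a, b) := by
    rintro ⟨x, y⟩ hxy hz
    dsimp only at hxy hz
    by_cases hc : (x, y) = (a, b)
    · exact hc
    · rw [if_neg hc] at hz
      have h1 : s x = a := congrArg Prod.fst hz
      have h2 : s y = b := congrArg Prod.snd hz
      have hx : x = b := by rw [← hss x, h1, hs, Equiv.swap_apply_left]
      have hy : y = a := by rw [← hss y, h2, hs, Equiv.swap_apply_right]
      rw [hx, hy] at hxy
      rw [Fin.lt_def] at hxy; omega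
  have hInj : ∀ (S : Set (Fin n × Fin n)), (∀ z ∈ S, z.1 < z.2) →
      Set.InjOn (fun z : Fin n × Fin n => if z = (a, b) then z else (s z.1, s z.2)) S := by
    intro S hS z1 h1 z2 h2 heq
    dsimp only at heq
    by_cases c1 : z1 = (a, b) <;> by_cases c2 : z2 = (a, b)
    · rw [c1, c2]
    · rw [if_pos c1, if_neg c2] at heq
      exact absurd (hGF z2 (hS z2 h2) (by rw [if_neg c2, ← heq, c1])) c2
    · rw [if_neg c1, if_pos c2] at heq
      exact absurd (hGF z1 (hS z1 h1) (by rw [if_neg c1, heq, c2])) c1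
    · rw [if_neg c1, if_neg c2] at heq
      have e1 : s z1.1 = s z2.1 := congrArg Prod.fst heq
      have e2 : s z1.2 = s z2.2 := congrArg Prod.snd heq
      have f1 : z1.1 = z2.1 := by rw [← hss z1.1, e1, hss]
      have f2 : z1.2 = z2.2 := by rw [← hss z1.2, e2, hss]
      exact Prod.ext f1 f2
  have hle1 : (insert (a, b) (Invs u)).ncard ≤ (Invs u').ncard := by
    apply Set.ncard_le_ncard_of_injOn (fun z => if z = (a, b) then z else (s z.1, s z.2))
    · rintro ⟨x, y⟩ hz
      dsimp only
      by_cases hc : (x, y) = (a, b)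
      · rw [if_pos hc, hc]
        refine ⟨hab', ?_⟩
        rw [happ, happ, hs, Equiv.swap_apply_left, Equiv.swap_apply_right]
        exact h
      · rw [if_neg hc]
        rcases hz with hz | hz
        · exact absurd hz hc
        · obtain ⟨hxy, hvy⟩ := hz
          have hne : ¬(x = a ∧ y = b) := fun hd => hc (Prod.ext hd.1 hd.2)
          refine ⟨adj_swap_lt hab hxy hne, ?_⟩
          rw [happ, happ]
          dsimp only
          rw [hss, hss]
          exact hvy
    · apply hInj
      rintro ⟨x, y⟩ hz
      rcases hz with hz | hz
      · rw [hz]; exact hab'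
      · exact hz.1
  have hle2 : (Invs u').ncard ≤ (insert (a, b) (Invs u)).ncard := by
    apply Set.ncard_le_ncard_of_injOn (fun z => if z = (a, b) then z else (s z.1, s z.2))
    · rintro ⟨x, y⟩ hz
      obtain ⟨hxy, hvy⟩ := hz
      dsimp only
      by_cases hc : (x, y) = (a, b)
      · rw [if_pos hc, hc]; exact Set.mem_insert _ _
      · rw [if_neg hc]
        have hne : ¬(x = a ∧ y = b) := fun hd => hc (Prod.ext hd.1 hd.2)
        apply Set.mem_insert_of_mem
        refine ⟨adj_swap_lt hab hxy hne, ?_⟩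
        rw [happ, happ] at hvy
        exact hvy
    · apply hInj
      rintro ⟨x, y⟩ hz
      exact hz.1
  have hcard : (insert (a, b) (Invs u)).ncard = (Invs u).ncard + 1 :=
    Set.ncard_insert_of_notMem habne (invs_finite u)
  rw [invLength_eq, invLength_eq]
  omega

lemma invLength_mul_adj' {u : Equiv.Perm (Fin n)} {a b : Fin n} (hab : (b : ℕ) = (a : ℕ) + 1)
    (h : u b < u a) : invLength (u * Equiv.swap a b) + 1 = invLength u := by
  have h2 : (u * Equiv.swap a b) a < (u * Equiv.swap a b) b := by
    simp only [Equiv.Perm.mul_apply, Equiv.swap_apply_left, Equiv.swap_apply_right]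
    exact h
  have := invLength_mul_adj hab h2
  rw [mul_assoc, Equiv.swap_mul_self, mul_one] at this
  omega

lemma invLength_adj_mul {u : Equiv.Perm (Fin n)} {a b : Fin n} (hab : (b : ℕ) = (a : ℕ) + 1)
    (h : u⁻¹ a < u⁻¹ b) : invLength (Equiv.swap a b * u) = invLength u + 1 := by
  have key : invLength (Equiv.swap a b * u) = invLength (u⁻¹ * Equiv.swap a b) := by
    rw [← invLength_inv (Equiv.swap a b * u), mul_inv_rev, Equiv.swap_inv]
  rw [key, invLength_mul_adj hab h, invLength_inv]
lemma sRefl_block {j : {j : ℕ // j + 1 < n}} {m : ℕ} (hj : j.1 ≠ m) (x : Fin n) :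
    ((sRefl j x : Fin n) : ℕ) ≤ m ↔ (x : ℕ) ≤ m := by
  unfold sRefl
  by_cases hxa : x = ⟨j.1, Nat.lt_of_succ_lt j.2⟩
  · rw [hxa, Equiv.swap_apply_left]
    simp only [hxa]
    omega
  · by_cases hxb : x = ⟨j.1 + 1, j.2⟩
    · rw [hxb, Equiv.swap_apply_right]
      simp only [hxb]
      omega
    · rw [Equiv.swap_apply_of_ne_of_ne hxa hxb]

lemma prod_block {ms : List {j : ℕ // j + 1 < n}} {m : ℕ} (hj : ∀ a ∈ ms, a.1 ≠ m)
    (x : Fin n) : (((ms.map sRefl).prod x : Fin n) : ℕ) ≤ m ↔ (x : ℕ) ≤ m := by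
  induction ms generalizing x with
  | nil => simp
  | cons a rest ih =>
    simp only [List.map_cons, List.prod_cons, Equiv.Perm.mul_apply]
    rw [sRefl_block (hj a List.mem_cons_self) _,
      ih (fun b hb => hj b (List.mem_cons_of_mem a hb)) x]

lemma prod_block_inv {ms : List {j : ℕ // j + 1 < n}} {m : ℕ} (hj : ∀ a ∈ ms, a.1 ≠ m)
    (x : Fin n) : ((((ms.map sRefl).prod)⁻¹ x : Fin n) : ℕ) ≤ m ↔ (x : ℕ) ≤ m := by
  have := prod_block hj (((ms.map sRefl).prod)⁻¹ x)
  rw [show ((ms.map sRefl).prod) (((ms.map sRefl).prod)⁻¹ x) = x from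
    Equiv.apply_symm_apply _ x] at this
  exact this.symm

lemma prod_nodup_reduced : ∀ (ms : List {j : ℕ // j + 1 < n}),
    (ms.map Subtype.val).Nodup → invLength ((ms.map sRefl).prod) = ms.length := by
  intro ms
  induction ms with
  | nil => intro _; simpa using invLength_one
  | cons j rest ih =>
    intro hnd
    rw [List.map_cons, List.nodup_cons] at hnd
    obtain ⟨hj, hrest⟩ := hnd
    have hjne : ∀ a ∈ rest, a.1 ≠ j.1 := by
      intro a ha hc
      exact hj (hc ▸ List.mem_map_of_mem (f := Subtype.val) ha)
    set v := (rest.map sRefl).prod with hv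
    set a : Fin n := ⟨j.1, Nat.lt_of_succ_lt j.2⟩ with hadef
    set b : Fin n := ⟨j.1 + 1, j.2⟩ with hbdef
    have h1 : ((v⁻¹ a : Fin n) : ℕ) ≤ j.1 := (prod_block_inv hjne a).2 (le_refl _)
    have h2 : ¬ ((v⁻¹ b : Fin n) : ℕ) ≤ j.1 := fun hc => by
      have := (prod_block_inv hjne b).1 hc
      simp only [hbdef] at this
      omega
    have hab : v⁻¹ a < v⁻¹ b := by rw [Fin.lt_def]; omega
    have : invLength (Equiv.swap a b * v) = invLength v + 1 := invLength_adj_mul rfl hab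
    simp only [List.map_cons, List.prod_cons, List.length_cons]
    rw [show sRefl j = Equiv.swap a b from rfl, this, ih hrest]

lemma strong_exchange : ∀ (ms : List {j : ℕ // j + 1 < n}),
    (ms.map Subtype.val).Nodup → ∀ p q : Fin n, p < q →
    invLength ((ms.map sRefl).prod * Equiv.swap p q) < invLength ((ms.map sRefl).prod) →
    ∃ ms' : List {j : ℕ // j + 1 < n}, ms'.Sublist ms ∧
      (ms.map sRefl).prod * Equiv.swap p q = (ms'.map sRefl).prod := by
  intro ms
  induction ms with
  | nil =>
    intro _ p q hpq hlt
    simp only [List.map_nil, List.prod_nil, invLength_one] at hlt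
    omega
  | cons j rest ih =>
    intro hnd p q hpq hlt
    rw [List.map_cons, List.nodup_cons] at hnd
    obtain ⟨hj, hrest⟩ := hnd
    set v := (rest.map sRefl).prod with hv
    set a : Fin n := ⟨j.1, Nat.lt_of_succ_lt j.2⟩ with hadef
    set b : Fin n := ⟨j.1 + 1, j.2⟩ with hbdef
    have hprod : ((j :: rest).map sRefl).prod = sRefl j * v := by
      rw [List.map_cons, List.prod_cons]
    rw [hprod] at hlt
    have hupq : (sRefl j * v) q < (sRefl j * v) p :=
      lt_of_invLength_mul_swap_lt hpq hlt
    by_cases hc : invLength (v * Equiv.swap p q) < invLength v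
    · obtain ⟨ms', hsub, heq⟩ := ih hrest p q hpq hc
      refine ⟨j :: ms', hsub.cons₂ j, ?_⟩
      rw [hprod, mul_assoc, heq, List.map_cons, List.prod_cons]
    · have hvpq : v p < v q := by
        rcases lt_trichotomy (v p) (v q) with hd | hd | hd
        · exact hd
        · exact absurd (v.injective hd) (ne_of_lt hpq)
        · exact absurd (invLength_mul_swap_lt hpq hd) hc
      have hkey : v p = a ∧ v q = b := by
        by_contra hcon
        have := adj_swap_lt (a := a) (b := b) rfl hvpq hcon
        rw [show Equiv.swap a b = sRefl j from rfl] at this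
        exact absurd this (not_lt.2 hupq.le)
      obtain ⟨hva, hvb⟩ := hkey
      refine ⟨rest, List.sublist_cons_self j rest, ?_⟩
      rw [hprod]
      ext x
      rw [Equiv.Perm.mul_apply, Equiv.Perm.mul_apply]
      by_cases hxp : x = p
      · rw [hxp, Equiv.swap_apply_left, hvb,
          show sRefl j = Equiv.swap a b from rfl, Equiv.swap_apply_right, ← hva]
      · by_cases hxq : x = q
        · rw [hxq, Equiv.swap_apply_right, hva,
            show sRefl j = Equiv.swap a b from rfl, Equiv.swap_apply_left, ← hvb]
        · rw [Equiv.swap_apply_of_ne_of_ne hxp hxq]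
          have h1 : v x ≠ a := fun hd => hxp (v.injective (hd.trans hva.symm))
          have h2 : v x ≠ b := fun hd => hxq (v.injective (hd.trans hvb.symm))
          rw [show sRefl j = Equiv.swap a b from rfl, Equiv.swap_apply_of_ne_of_ne h1 h2]

lemma exists_insert {α : Type*} {ms js : List α} (h : ms.Sublist js)
    (hlen : ms.length < js.length) :
    ∃ (u : List α) (x : α) (v : List α), ms = u ++ v ∧ (u ++ x :: v).Sublist js := by
  induction h with
  | slnil => simp at hlen
  | @cons l1 l2 a h ih =>
    exact ⟨[], a, l1, rfl, h.cons₂ a⟩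
  | @cons_cons l1 l2 a h ih =>
    simp only [List.length_cons, Nat.add_lt_add_iff_right] at hlen
    obtain ⟨u, x, v, hms, hsub⟩ := ih hlen
    exact ⟨a :: u, x, v, by rw [hms, List.cons_append], by rw [List.cons_append]; exact hsub.cons₂ a⟩

lemma subword_le (js : List {j : ℕ // j + 1 < n}) (hnd : (js.map Subtype.val).Nodup) :
    ∀ (k : ℕ) (ms : List {j : ℕ // j + 1 < n}), ms.Sublist js → js.length - ms.length ≤ k →
    BruhatLE ((ms.map sRefl).prod) ((js.map sRefl).prod) := by
  intro k
  induction k with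
  | zero =>
    intro ms hsub hlen
    have hle := hsub.length_le
    have : ms.length = js.length := by omega
    rw [hsub.eq_of_length this]
    exact Relation.ReflTransGen.refl
  | succ k ih =>
    intro ms hsub hlen
    by_cases heq : ms.length = js.length
    · rw [hsub.eq_of_length heq]
      exact Relation.ReflTransGen.refl
    · have hlt : ms.length < js.length := lt_of_le_of_ne hsub.length_le heq
      obtain ⟨u, x, v, rfl, hsub'⟩ := exists_insert hsub hlt
      set pu := (u.map sRefl).prod with hpu
      set pv := (v.map sRefl).prod with hpv
      have hb : ((u ++ x :: v).map sRefl).prod = pu * (sRefl x * pv) := by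
        rw [List.map_append, List.prod_append, List.map_cons, List.prod_cons]
      have ha : ((u ++ v).map sRefl).prod = pu * pv := by
        rw [List.map_append, List.prod_append]
      set ax : Fin n := ⟨x.1, Nat.lt_of_succ_lt x.2⟩ with hax
      set bx : Fin n := ⟨x.1 + 1, x.2⟩ with hbx
      have hconj : pu * pv * Equiv.swap (pv⁻¹ ax) (pv⁻¹ bx) = pu * (sRefl x * pv) := by
        rw [Equiv.swap_apply_apply]
        rw [show Equiv.swap ax bx = sRefl x from rfl]
        simp only [mul_assoc, inv_inv, mul_inv_cancel_left]
      -- nodups of the two subwords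
      have hnd1 : ((u ++ v).map Subtype.val).Nodup := by
        have hs : (u ++ v).Sublist (u ++ x :: v) :=
          List.Sublist.append_left (List.sublist_cons_self x v) u
        exact hnd.sublist ((hs.trans hsub').map Subtype.val)
      have hnd2 : ((u ++ x :: v).map Subtype.val).Nodup := hnd.sublist (hsub'.map Subtype.val)
      have hlen1 := prod_nodup_reduced (u ++ v) hnd1
      have hlen2 := prod_nodup_reduced (u ++ x :: v) hnd2
      have hstep : (fun a b => (∃ i j : Fin n, b = a * Equiv.swap i j) ∧
          invLength a < invLength b) ((u ++ v).map sRefl).prod ((u ++ x :: v).map sRefl).prod := by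
        constructor
        · exact ⟨pv⁻¹ ax, pv⁻¹ bx, by rw [hb, ha, hconj]⟩
        · rw [hlen1, hlen2]
          simp only [List.length_append, List.length_cons]
          omega
      have htail : BruhatLE (((u ++ x :: v).map sRefl).prod) ((js.map sRefl).prod) := by
        apply ih (u ++ x :: v) hsub'
        have := hsub'.length_le
        simp only [List.length_append, List.length_cons] at *
        omega
      exact Relation.ReflTransGen.head hstep htail

lemma le_subword {js : List {j : ℕ // j + 1 < n}} (hnd : (js.map Subtype.val).Nodup)
    {x : Equiv.Perm (Fin n)} (h : BruhatLE x ((js.map sRefl).prod)) :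
    ∃ ms : List {j : ℕ // j + 1 < n}, ms.Sublist js ∧ x = (ms.map sRefl).prod := by
  unfold BruhatLE at h
  refine Relation.ReflTransGen.head_induction_on h ⟨js, List.Sublist.refl js, rfl⟩ ?_
  rintro a c ⟨⟨i, j, hac⟩, hlt⟩ _ ⟨ms, hsub, hc⟩
  have hij : i ≠ j := by
    rintro rfl
    rw [Equiv.swap_self] at hac
    have : c = a := by rw [hac]; ext y; rfl
    rw [this] at hlt; omega
  have ha : a = c * Equiv.swap i j := by
    rw [hac, mul_assoc, Equiv.swap_mul_self, mul_one]
  have hndms : (ms.map Subtype.val).Nodup := hnd.sublist (hsub.map Subtype.val)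
  have hlt' : invLength ((ms.map sRefl).prod * Equiv.swap i j) < invLength ((ms.map sRefl).prod) := by
    rw [← hc, ← ha]; exact hlt
  rcases lt_or_gt_of_ne hij with hij' | hij'
  · obtain ⟨ms', hsub', heq⟩ := strong_exchange ms hndms i j hij' hlt'
    exact ⟨ms', hsub'.trans hsub, by rw [ha, hc, heq]⟩
  · rw [Equiv.swap_comm] at hlt' ha
    obtain ⟨ms', hsub', heq⟩ := strong_exchange ms hndms j i hij' hlt'
    exact ⟨ms', hsub'.trans hsub, by rw [ha, hc, heq]⟩

lemma sRefl_le_prod_iff {ms : List {j : ℕ // j + 1 < n}} (hnd : (ms.map Subtype.val).Nodup)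
    (j : {j : ℕ // j + 1 < n}) :
    BruhatLE (sRefl j) ((ms.map sRefl).prod) ↔ j.1 ∈ ms.map Subtype.val := by
  constructor
  · intro h
    by_contra hmem
    obtain ⟨ts, hsub, heq⟩ := le_subword hnd h
    have hne : ∀ a ∈ ts, a.1 ≠ j.1 := by
      intro a ha hc
      exact hmem (hc ▸ List.mem_map_of_mem (f := Subtype.val) (hsub.subset ha))
    have hblock := prod_block hne (⟨j.1, Nat.lt_of_succ_lt j.2⟩ : Fin n)
    rw [← heq] at hblock
    have : ((sRefl j ⟨j.1, Nat.lt_of_succ_lt j.2⟩ : Fin n) : ℕ) ≤ j.1 := hblock.2 (le_refl _)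
    rw [show sRefl j ⟨j.1, Nat.lt_of_succ_lt j.2⟩ = ⟨j.1 + 1, j.2⟩ from Equiv.swap_apply_left _ _]
      at this
    simp at this
  · intro h
    obtain ⟨a, ha, hav⟩ := List.mem_map.1 h
    have haj : a = j := Subtype.ext hav
    have hsub : [a].Sublist ms := List.singleton_sublist.2 ha
    have := subword_le ms hnd ms.length [a] hsub (by omega)
    simpa [haj] using this

lemma sublist_eq_filter {α : Type*} [DecidableEq α] :
    ∀ {ms js : List α}, ms.Sublist js → js.Nodup → ms = js.filter (fun a => a ∈ ms) := by
  intro ms js h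
  induction h with
  | slnil => intro _; rfl
  | @cons l1 l2 a h ih =>
    intro hnd
    rw [List.nodup_cons] at hnd
    have ha : a ∉ l1 := fun hc => hnd.1 (h.subset hc)
    have hdec : (decide (a ∈ l1)) = false := decide_eq_false ha
    rw [List.filter_cons, hdec]
    simp only [Bool.false_eq_true, if_false]
    exact ih hnd.2
  | @cons_cons l1 l2 a h ih =>
    intro hnd
    rw [List.nodup_cons] at hnd
    have hdec : (decide (a ∈ a :: l1)) = true := decide_eq_true List.mem_cons_self
    rw [List.filter_cons, hdec]
    simp only [if_true]
    have hcong : List.filter (fun b => decide (b ∈ a :: l1)) l2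
        = List.filter (fun b => decide (b ∈ l1)) l2 := by
      apply List.filter_congr
      intro b hb
      have : (b ∈ a :: l1) ↔ (b ∈ l1) := by
        simp only [List.mem_cons]
        constructor
        · rintro (rfl | hbl)
          · exact absurd hb hnd.1
          · exact hbl
        · exact Or.inr
      simp [this]
    rw [hcong, ← ih hnd.2]

lemma nat_card_set_fin (l : ℕ) : Nat.card (Set (Fin l)) = 2 ^ l := by
  rw [Nat.card_eq_fintype_card, Fintype.card_set, Fintype.card_fin]

theorem stmt16' (n : ℕ) (js : List {j : ℕ // j + 1 < n})
    (hnd : (js.map Subtype.val).Nodup) :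
    Function.Bijective
      (fun x : {x : Equiv.Perm (Fin n) // BruhatLE x ((js.map sRefl).prod)} =>
        ({i : Fin js.length | BruhatLE (sRefl (js.get i)) x.1} : Set (Fin js.length))) ∧
    Nat.card {x : Equiv.Perm (Fin n) // BruhatLE x ((js.map sRefl).prod)}
      = 2 ^ invLength ((js.map sRefl).prod) := by
  classical
  have hndjs : js.Nodup := hnd.of_map
  have hbij : Function.Bijective
      (fun x : {x : Equiv.Perm (Fin n) // BruhatLE x ((js.map sRefl).prod)} =>
        ({i : Fin js.length | BruhatLE (sRefl (js.get i)) x.1} : Set (Fin js.length))) := by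
    constructor
    · rintro ⟨x, hx⟩ ⟨y, hy⟩ hxy
      obtain ⟨ms, hsub, rfl⟩ := le_subword hnd hx
      obtain ⟨ms', hsub', rfl⟩ := le_subword hnd hy
      simp only [Set.ext_iff, Set.mem_setOf_eq] at hxy
      have hmm : ∀ a ∈ js, (a ∈ ms ↔ a ∈ ms') := by
        intro a ha
        obtain ⟨i, hi⟩ := List.mem_iff_get.1 ha
        have h1 := sRefl_le_prod_iff (hnd.sublist (hsub.map Subtype.val)) (js.get i)
        have h2 := sRefl_le_prod_iff (hnd.sublist (hsub'.map Subtype.val)) (js.get i)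
        have hval : (js.get i).1 ∈ ms.map Subtype.val ↔ (js.get i).1 ∈ ms'.map Subtype.val :=
          h1.symm.trans ((hxy i).trans h2)
        rw [hi] at hval
        constructor
        · intro hms
          obtain ⟨b, hb, hb2⟩ := List.mem_map.1 (hval.1 (List.mem_map_of_mem (f := Subtype.val) hms))
          exact (Subtype.ext hb2 : b = a) ▸ hb
        · intro hms
          obtain ⟨b, hb, hb2⟩ := List.mem_map.1 (hval.2 (List.mem_map_of_mem (f := Subtype.val) hms))
          exact (Subtype.ext hb2 : b = a) ▸ hb
      have hmseq : ms = ms' := by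
        rw [sublist_eq_filter hsub hndjs, sublist_eq_filter hsub' hndjs]
        apply List.filter_congr
        intro a ha
        simp only [decide_eq_decide]
        exact hmm a ha
      exact Subtype.ext (congrArg (fun l : List {j : ℕ // j + 1 < n} => (l.map sRefl).prod) hmseq)
    · intro S
      set ms := ((List.finRange js.length).filter (fun i => decide (i ∈ S))).map js.get with hms
      have hsub : ms.Sublist js := by
        have h1 := (List.filter_sublist (l := List.finRange js.length)
          (p := fun i => decide (i ∈ S))).map js.get
        rwa [List.map_get_finRange] at h1
      refine ⟨⟨(ms.map sRefl).prod, subword_le js hnd js.length ms hsub (by omega)⟩, ?_⟩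
      ext i
      simp only [Set.mem_setOf_eq]
      rw [sRefl_le_prod_iff (hnd.sublist (hsub.map Subtype.val)) (js.get i)]
      constructor
      · intro h
        obtain ⟨b, hb, hbv⟩ := List.mem_map.1 h
        rw [hms] at hb
        obtain ⟨i', hi', hget⟩ := List.mem_map.1 hb
        have hbi : b = js.get i := Subtype.ext hbv
        have : js.get i' = js.get i := by rw [hget, hbi]
        have hii : i' = i := hndjs.get_inj_iff.1 this
        rw [List.mem_filter] at hi'
        exact hii ▸ (of_decide_eq_true hi'.2)
      · intro hiS
        apply List.mem_map_of_mem (f := Subtype.val)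
        rw [hms]
        apply List.mem_map_of_mem (f := js.get)
        rw [List.mem_filter]
        exact ⟨List.mem_finRange i, decide_eq_true hiS⟩
  refine ⟨hbij, ?_⟩
  rw [Nat.card_eq_of_bijective _ hbij, nat_card_set_fin, prod_nodup_reduced js hnd]

end BoolAux

/-- For a Boolean permutation `w = s_{j_1} ⋯ s_{j_l}` with `j_1, …, j_l` distinct, the map
`x ↦ I_x = {i : s_{j_i} ≤ x}` is a bijection from `{x : x ≤ w}` onto the power set of
`{1, …, l}`; in particular `#{x : x ≤ w} = 2^{ℓ(w)}`. -/
theorem stmt16 (n : ℕ) (w : Equiv.Perm (Fin n)) (js : List {j : ℕ // j + 1 < n})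
    (hnd : (js.map Subtype.val).Nodup) (hw : w = (js.map sRefl).prod) :
    Function.Bijective
      (fun x : {x : Equiv.Perm (Fin n) // BruhatLE x w} =>
        ({i : Fin js.length | BruhatLE (sRefl (js.get i)) x.1} : Set (Fin js.length))) ∧
    Nat.card {x : Equiv.Perm (Fin n) // BruhatLE x w} = 2 ^ invLength w := by
  subst hw
  exact BoolAux.stmt16' n js hnd
end
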